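/- arXiv:2512.17006 — 7 statements merged into one kernel-verified Lean document; each statement's English description precedes it below -/
import Mathlib

section
/- The Butcher table of Table 1 satisfies all four order-4 conditions: Σ_i b_i c_i³ = 1/4; Σ_{i,j} b_i c_i a(i,j) c_j = 1/8; Σ_{i,j} b_i a(i,j) c_j² = 1/12; and Σ_{i,j,k} b_i a(i,j) a(j,k) c_k = 1/24. -/
open Finset

/-- Coefficient matrix `a` of the paper's eight-stage sixth-order scheme (Table 1). -/
def a : Matrix (Fin 8) (Fin 8) ℚ :=
  !![0,      0,      0,      0,     0,      0,      0,     0;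
     1/6,    0,      0,      0,     0,      0,      0,     0;
     1/12,   1/12,   0,      0,     0,      0,      0,     0;
     0,      -4/33,  5/11,   0,     0,      0,      0,     0;
     -1/4,   -29/44, 31/22,  0,     0,      0,      0,     0;
     3/11,   8/33,   -4/11,  1/11,  14/33,  0,      0,     0;
     -17/48, -5/12,  1,      1,     -13/12, 11/16,  0,     0;
     20/39,  12/39,  -31/39, -1/39, 34/39,  -11/39, 16/39, 0]

/-- Weights `b` of Table 1. -/
def b : Fin 8 → ℚ := ![13/200, 0, 4/25, 11/40, 0, 11/40, 4/25, 13/200]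

/-- Abscissae `c i = Σ_j a i j` of Table 1. -/
def c : Fin 8 → ℚ := fun i => ∑ j, a i j

set_option maxHeartbeats 2000000 in
/-- Table 1 satisfies all four order-4 conditions. -/
theorem order_conditions_4 :
    (∑ i, b i * c i ^ 3) = 1/4 ∧
    (∑ i, ∑ j, b i * c i * a i j * c j) = 1/8 ∧
    (∑ i, ∑ j, b i * a i j * c j ^ 2) = 1/12 ∧
    (∑ i, ∑ j, ∑ k, b i * a i j * a j k * c k) = 1/24 := by
  refine ⟨?_, ?_, ?_, ?_⟩ <;>
  · simp only [Fin.sum_univ_succ, Finset.sum_empty, a, b, c, Matrix.cons_val_zero,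
      Matrix.cons_val_one, Matrix.head_cons, Matrix.of_apply, Matrix.cons_val', Matrix.empty_val',
      Matrix.cons_val_fin_one, Matrix.head_fin_const, Fin.sum_univ_zero, Matrix.vecHead,
      Matrix.vecTail, Function.comp, Matrix.cons_val_succ]
    norm_num
end

section
/- The Butcher table of Table 1 satisfies all nine order-5 conditions: Σ_i b_i c_i⁴ = 1/5; Σ_{i,j} b_i c_i² a(i,j) c_j = 1/10; Σ_i b_i (Σ_j a(i,j) c_j)² = 1/20; Σ_{i,j} b_i c_i a(i,j) c_j² = 1/15; Σ_{i,j,k} b_i c_i a(i,j) a(j,k) c_k = 1/30; Σ_{i,j} b_i a(i,j) c_j³ = 1/20; Σ_{i,j,k} b_i a(i,j) c_j a(j,k) c_k = 1/40; Σ_{i,j,k} b_i a(i,j) a(j,k) c_k² = 1/60; and Σ_{i,j,k,l} b_i a(i,j) a(j,k) a(k,l) c_l = 1/120. -/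
open Finset

variable {α : Type*}
lemma v8_0 (x0 x1 x2 x3 x4 x5 x6 x7 : α) : ![x0,x1,x2,x3,x4,x5,x6,x7] 0 = x0 := rfl
lemma v8_1 (x0 x1 x2 x3 x4 x5 x6 x7 : α) : ![x0,x1,x2,x3,x4,x5,x6,x7] 1 = x1 := rfl
lemma v8_2 (x0 x1 x2 x3 x4 x5 x6 x7 : α) : ![x0,x1,x2,x3,x4,x5,x6,x7] 2 = x2 := rfl
lemma v8_3 (x0 x1 x2 x3 x4 x5 x6 x7 : α) : ![x0,x1,x2,x3,x4,x5,x6,x7] 3 = x3 := rfl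
lemma v8_4 (x0 x1 x2 x3 x4 x5 x6 x7 : α) : ![x0,x1,x2,x3,x4,x5,x6,x7] 4 = x4 := rfl
lemma v8_5 (x0 x1 x2 x3 x4 x5 x6 x7 : α) : ![x0,x1,x2,x3,x4,x5,x6,x7] 5 = x5 := rfl
lemma v8_6 (x0 x1 x2 x3 x4 x5 x6 x7 : α) : ![x0,x1,x2,x3,x4,x5,x6,x7] 6 = x6 := rfl
lemma v8_7 (x0 x1 x2 x3 x4 x5 x6 x7 : α) : ![x0,x1,x2,x3,x4,x5,x6,x7] 7 = x7 := rfl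

set_option maxHeartbeats 4000000

/-- Table 1 satisfies all nine order-5 conditions. -/
theorem order_conditions_5 :
    (∑ i, b i * c i ^ 4) = 1/5 ∧
    (∑ i, ∑ j, b i * c i ^ 2 * a i j * c j) = 1/10 ∧
    (∑ i, b i * (∑ j, a i j * c j) ^ 2) = 1/20 ∧
    (∑ i, ∑ j, b i * c i * a i j * c j ^ 2) = 1/15 ∧
    (∑ i, ∑ j, ∑ k, b i * c i * a i j * a j k * c k) = 1/30 ∧
    (∑ i, ∑ j, b i * a i j * c j ^ 3) = 1/20 ∧
    (∑ i, ∑ j, ∑ k, b i * a i j * c j * a j k * c k) = 1/40 ∧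
    (∑ i, ∑ j, ∑ k, b i * a i j * a j k * c k ^ 2) = 1/60 ∧
    (∑ i, ∑ j, ∑ k, ∑ l, b i * a i j * a j k * a k l * c l) = 1/120 := by
  refine ⟨?_, ?_, ?_, ?_, ?_, ?_, ?_, ?_, ?_⟩ <;>
  · decide +kernel
end

section
/- The Butcher table of Table 1 satisfies the following ten of the twenty order-6 conditions: Σ_i b_i c_i⁵ = 1/6; Σ_{i,j} b_i c_i³ a(i,j) c_j = 1/12; Σ_i b_i c_i (Σ_j a(i,j) c_j)² = 1/24; Σ_{i,j} b_i c_i² a(i,j) c_j² = 1/18; Σ_i b_i (Σ_j a(i,j) c_j)(Σ_j a(i,j) c_j²) = 1/36; Σ_{i,j,k} b_i c_i² a(i,j) a(j,k) c_k = 1/36; Σ_i b_i (Σ_j a(i,j) c_j)(Σ_{j,k} a(i,j) a(j,k) c_k) = 1/72; Σ_{i,j} b_i c_i a(i,j) c_j³ = 1/24; Σ_{i,j,k} b_i c_i a(i,j) c_j a(j,k) c_k = 1/48; and Σ_{i,j,k} b_i c_i a(i,j) a(j,k) c_k² = 1/72. -/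
open Finset

set_option maxHeartbeats 4000000 in
/-- Table 1 satisfies the first ten of the twenty order-6 conditions. -/
theorem order_conditions_6_first_ten :
    (∑ i, b i * c i ^ 5) = 1/6 ∧
    (∑ i, ∑ j, b i * c i ^ 3 * a i j * c j) = 1/12 ∧
    (∑ i, b i * c i * (∑ j, a i j * c j) ^ 2) = 1/24 ∧
    (∑ i, ∑ j, b i * c i ^ 2 * a i j * c j ^ 2) = 1/18 ∧
    (∑ i, b i * (∑ j, a i j * c j) * (∑ j, a i j * c j ^ 2)) = 1/36 ∧
    (∑ i, ∑ j, ∑ k, b i * c i ^ 2 * a i j * a j k * c k) = 1/36 ∧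
    (∑ i, b i * (∑ j, a i j * c j) * (∑ j, ∑ k, a i j * a j k * c k)) = 1/72 ∧
    (∑ i, ∑ j, b i * c i * a i j * c j ^ 3) = 1/24 ∧
    (∑ i, ∑ j, ∑ k, b i * c i * a i j * c j * a j k * c k) = 1/48 ∧
    (∑ i, ∑ j, ∑ k, b i * c i * a i j * a j k * c k ^ 2) = 1/72 := by
  refine ⟨?_,?_,?_,?_,?_,?_,?_,?_,?_,?_⟩ <;>
  · simp only [a, b, c, Fin.sum_univ_succ, Fin.sum_univ_zero, Matrix.cons_val_zero,
      Matrix.cons_val_one, Matrix.head_cons, Matrix.cons_val_succ, Matrix.of_apply,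
      Matrix.cons_val', Matrix.empty_val', Matrix.cons_val_fin_one, Matrix.head_fin_const]
    norm_num
end

section
/- Regarding a = a(i,j) of Table 1 as an 8×8 matrix A over ℚ, b as a row vector, and 𝟙 as the all-ones column vector, the linear stability weights of the scheme are bᵀ Aᵏ⁻¹ 𝟙 = 1/k! for k = 1, 2, 3, 4, 5, 6, while bᵀ A⁶ 𝟙 = 29/178200 and bᵀ A⁷ 𝟙 = 0; consequently the stability function of the scheme is the polynomial Φ(z) = 1 + z + z²/2! + z³/3! + z⁴/4! + z⁵/5! + z⁶/6! + (29/178200) z⁷ for all z. -/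
open Finset Matrix

def v0 : Fin 8 → ℚ := ![(1 : ℚ), (1 : ℚ), (1 : ℚ), (1 : ℚ), (1 : ℚ), (1 : ℚ), (1 : ℚ), (1 : ℚ)]
def v1 : Fin 8 → ℚ := ![(0 : ℚ), (1/6 : ℚ), (1/6 : ℚ), (1/3 : ℚ), (1/2 : ℚ), (2/3 : ℚ), (5/6 : ℚ), (1 : ℚ)]
def v2 : Fin 8 → ℚ := ![(0 : ℚ), (0 : ℚ), (1/72 : ℚ), (1/18 : ℚ), (1/8 : ℚ), (2/9 : ℚ), (25/72 : ℚ), (1/2 : ℚ)]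
def v3 : Fin 8 → ℚ := ![(0 : ℚ), (0 : ℚ), (0 : ℚ), (5/792 : ℚ), (31/1584 : ℚ), (7/132 : ℚ), (25/288 : ℚ), (55/312 : ℚ)]
def v4 : Fin 8 → ℚ := ![(0 : ℚ), (0 : ℚ), (0 : ℚ), (0 : ℚ), (0 : ℚ), (29/3267 : ℚ), (205/9504 : ℚ), (145/3861 : ℚ)]
def v5 : Fin 8 → ℚ := ![(0 : ℚ), (0 : ℚ), (0 : ℚ), (0 : ℚ), (0 : ℚ), (0 : ℚ), (29/4752 : ℚ), (49/7722 : ℚ)]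
def v6 : Fin 8 → ℚ := ![(0 : ℚ), (0 : ℚ), (0 : ℚ), (0 : ℚ), (0 : ℚ), (0 : ℚ), (0 : ℚ), (29/11583 : ℚ)]
def v7 : Fin 8 → ℚ := ![(0 : ℚ), (0 : ℚ), (0 : ℚ), (0 : ℚ), (0 : ℚ), (0 : ℚ), (0 : ℚ), (0 : ℚ)]

lemma hv0 : (a ^ 0).mulVec 1 = v0 := by
  rw [pow_zero, Matrix.one_mulVec]
  funext i; fin_cases i <;> rfl

lemma s01 : a.mulVec v0 = v1 := by
  simp only [a, v0, v1, Matrix.cons_mulVec, Matrix.cons_dotProduct, Matrix.dotProduct_of_isEmpty,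
    Matrix.empty_mulVec, Matrix.of_apply]
  norm_num
lemma s12 : a.mulVec v1 = v2 := by
  simp only [a, v1, v2, Matrix.cons_mulVec, Matrix.cons_dotProduct, Matrix.dotProduct_of_isEmpty,
    Matrix.empty_mulVec, Matrix.of_apply]
  norm_num
lemma s23 : a.mulVec v2 = v3 := by
  simp only [a, v2, v3, Matrix.cons_mulVec, Matrix.cons_dotProduct, Matrix.dotProduct_of_isEmpty,
    Matrix.empty_mulVec, Matrix.of_apply]
  norm_num
lemma s34 : a.mulVec v3 = v4 := by
  simp only [a, v3, v4, Matrix.cons_mulVec, Matrix.cons_dotProduct, Matrix.dotProduct_of_isEmpty,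
    Matrix.empty_mulVec, Matrix.of_apply]
  norm_num
lemma s45 : a.mulVec v4 = v5 := by
  simp only [a, v4, v5, Matrix.cons_mulVec, Matrix.cons_dotProduct, Matrix.dotProduct_of_isEmpty,
    Matrix.empty_mulVec, Matrix.of_apply]
  norm_num
lemma s56 : a.mulVec v5 = v6 := by
  simp only [a, v5, v6, Matrix.cons_mulVec, Matrix.cons_dotProduct, Matrix.dotProduct_of_isEmpty,
    Matrix.empty_mulVec, Matrix.of_apply]
  norm_num
lemma s67 : a.mulVec v6 = v7 := by
  simp only [a, v6, v7, Matrix.cons_mulVec, Matrix.cons_dotProduct, Matrix.dotProduct_of_isEmpty,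
    Matrix.empty_mulVec, Matrix.of_apply]
  norm_num

lemma pow_step (k : ℕ) (v w : Fin 8 → ℚ) (hv : (a ^ k).mulVec 1 = v)
    (hw : a.mulVec v = w) : (a ^ (k + 1)).mulVec 1 = w := by
  rw [pow_succ', ← Matrix.mulVec_mulVec, hv, hw]

lemma hv1 : (a ^ 1).mulVec 1 = v1 := pow_step 0 v0 v1 hv0 s01
lemma hv2 : (a ^ 2).mulVec 1 = v2 := pow_step 1 v1 v2 hv1 s12
lemma hv3 : (a ^ 3).mulVec 1 = v3 := pow_step 2 v2 v3 hv2 s23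
lemma hv4 : (a ^ 4).mulVec 1 = v4 := pow_step 3 v3 v4 hv3 s34
lemma hv5 : (a ^ 5).mulVec 1 = v5 := pow_step 4 v4 v5 hv4 s45
lemma hv6 : (a ^ 6).mulVec 1 = v6 := pow_step 5 v5 v6 hv5 s56
lemma hv7 : (a ^ 7).mulVec 1 = v7 := pow_step 6 v6 v7 hv6 s67

lemma w0 : b ⬝ᵥ v0 = 1 := by norm_num [b, v0, dotProduct, Fin.sum_univ_succ]
lemma w1 : b ⬝ᵥ v1 = 1/2 := by norm_num [b, v1, dotProduct, Fin.sum_univ_succ]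
lemma w2 : b ⬝ᵥ v2 = 1/6 := by norm_num [b, v2, dotProduct, Fin.sum_univ_succ]
lemma w3 : b ⬝ᵥ v3 = 1/24 := by norm_num [b, v3, dotProduct, Fin.sum_univ_succ]
lemma w4 : b ⬝ᵥ v4 = 1/120 := by norm_num [b, v4, dotProduct, Fin.sum_univ_succ]
lemma w5 : b ⬝ᵥ v5 = 1/720 := by norm_num [b, v5, dotProduct, Fin.sum_univ_succ]
lemma w6 : b ⬝ᵥ v6 = 29/178200 := by norm_num [b, v6, dotProduct, Fin.sum_univ_succ]
lemma w7 : b ⬝ᵥ v7 = 0 := by norm_num [b, v7, dotProduct, Fin.sum_univ_succ]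

/-- the linear stability weights of Table 1 are `bᵀ Aᵏ⁻¹ 𝟙 = 1/k!` for
`k = 1,…,6`, `bᵀ A⁶ 𝟙 = 29/178200`, `bᵀ A⁷ 𝟙 = 0`; hence the stability function is
`Φ(z) = 1 + z + z²/2! + z³/3! + z⁴/4! + z⁵/5! + z⁶/6! + (29/178200) z⁷` for all `z`. -/
theorem stability_function_RK6 :
    (∀ k : ℕ, 1 ≤ k → k ≤ 6 → b ⬝ᵥ (a ^ (k - 1)).mulVec 1 = 1 / (Nat.factorial k : ℚ)) ∧
    b ⬝ᵥ (a ^ 6).mulVec 1 = 29 / 178200 ∧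
    b ⬝ᵥ (a ^ 7).mulVec 1 = 0 ∧
    (∀ z : ℝ,
      1 + ∑ k ∈ Finset.Icc 1 8, ((b ⬝ᵥ (a ^ (k - 1)).mulVec 1 : ℚ) : ℝ) * z ^ k =
        1 + z + z ^ 2 / (Nat.factorial 2 : ℝ) + z ^ 3 / (Nat.factorial 3 : ℝ)
          + z ^ 4 / (Nat.factorial 4 : ℝ) + z ^ 5 / (Nat.factorial 5 : ℝ)
          + z ^ 6 / (Nat.factorial 6 : ℝ) + (29 / 178200) * z ^ 7) := by
  refine ⟨?_, by rw [hv6, w6], by rw [hv7, w7], ?_⟩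
  · intro k h1 h6
    interval_cases k
    · show b ⬝ᵥ (a ^ 0).mulVec 1 = _; rw [hv0, w0]; norm_num [Nat.factorial]
    · show b ⬝ᵥ (a ^ 1).mulVec 1 = _; rw [hv1, w1]; norm_num [Nat.factorial]
    · show b ⬝ᵥ (a ^ 2).mulVec 1 = _; rw [hv2, w2]; norm_num [Nat.factorial]
    · show b ⬝ᵥ (a ^ 3).mulVec 1 = _; rw [hv3, w3]; norm_num [Nat.factorial]
    · show b ⬝ᵥ (a ^ 4).mulVec 1 = _; rw [hv4, w4]; norm_num [Nat.factorial]
    · show b ⬝ᵥ (a ^ 5).mulVec 1 = _; rw [hv5, w5]; norm_num [Nat.factorial]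
  · intro z
    have hsum : ∀ f : ℕ → ℝ, ∑ k ∈ Finset.Icc 1 8, f k
        = f 1 + f 2 + f 3 + f 4 + f 5 + f 6 + f 7 + f 8 := by
      intro f
      rw [show Finset.Icc 1 8 = ({1,2,3,4,5,6,7,8} : Finset ℕ) from by decide]
      rw [Finset.sum_insert (by decide), Finset.sum_insert (by decide),
        Finset.sum_insert (by decide), Finset.sum_insert (by decide),
        Finset.sum_insert (by decide), Finset.sum_insert (by decide),
        Finset.sum_insert (by decide), Finset.sum_singleton]
      ring
    rw [hsum]
    have e1 : b ⬝ᵥ (a ^ (1 - 1)).mulVec 1 = 1 := by rw [show (1-1 : ℕ) = 0 from rfl, hv0, w0]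
    have e2 : b ⬝ᵥ (a ^ (2 - 1)).mulVec 1 = 1/2 := by rw [show (2-1 : ℕ) = 1 from rfl, hv1, w1]
    have e3 : b ⬝ᵥ (a ^ (3 - 1)).mulVec 1 = 1/6 := by rw [show (3-1 : ℕ) = 2 from rfl, hv2, w2]
    have e4 : b ⬝ᵥ (a ^ (4 - 1)).mulVec 1 = 1/24 := by rw [show (4-1 : ℕ) = 3 from rfl, hv3, w3]
    have e5 : b ⬝ᵥ (a ^ (5 - 1)).mulVec 1 = 1/120 := by rw [show (5-1 : ℕ) = 4 from rfl, hv4, w4]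
    have e6 : b ⬝ᵥ (a ^ (6 - 1)).mulVec 1 = 1/720 := by rw [show (6-1 : ℕ) = 5 from rfl, hv5, w5]
    have e7 : b ⬝ᵥ (a ^ (7 - 1)).mulVec 1 = 29/178200 := by
      rw [show (7-1 : ℕ) = 6 from rfl, hv6, w6]
    have e8 : b ⬝ᵥ (a ^ (8 - 1)).mulVec 1 = 0 := by rw [show (8-1 : ℕ) = 7 from rfl, hv7, w7]
    rw [e1, e2, e3, e4, e5, e6, e7, e8]
    norm_num [Nat.factorial]
    ring
end

section
/- Let s : ℕ and let a : Fin s → Fin s → ℂ be strictly lower triangular (a i j = 0 for j ≥ i), b : Fin s → ℂ arbitrary weights, and c i = Σ_j a i j. Fix λ₁, λ₂, h, u₀ ∈ ℂ and set z₁ = hλ₁, z₂ = hλ₂. Define the Lawson stages U : Fin s → ℂ recursively by U i = exp(c i · z₂) · u₀ + Σ_{j<i} a i j · exp((c i − c j) · z₂) · (z₁ · U j), and define the plain Runge–Kutta stages V : Fin s → ℂ by V i = u₀ + Σ_{j<i} a i j · (z₁ · V j). Then U i = exp(c i · z₂) · V i for every i. -/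
open Finset Complex

/-- for any explicit Runge–Kutta table, the Lawson stages on the scalar
test equation `ẋ = λ₁x + λ₂x` equal `exp(c i z₂)` times the plain Runge–Kutta stages. -/
theorem lawson_stages_eq_exp_mul_rk_stages
    (s : ℕ) (a : Fin s → Fin s → ℂ)
    (ha : ∀ i j : Fin s, i ≤ j → a i j = 0)
    (b : Fin s → ℂ) (c : Fin s → ℂ) (hc : ∀ i, c i = ∑ j, a i j)
    (lam₁ lam₂ h u₀ : ℂ) (z₁ z₂ : ℂ) (hz₁ : z₁ = h * lam₁) (hz₂ : z₂ = h * lam₂)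
    (U V : Fin s → ℂ)
    (hU : ∀ i, U i = Complex.exp (c i * z₂) * u₀ +
      ∑ j ∈ Finset.univ.filter (fun j => j < i),
        a i j * Complex.exp ((c i - c j) * z₂) * (z₁ * U j))
    (hV : ∀ i, V i = u₀ +
      ∑ j ∈ Finset.univ.filter (fun j => j < i), a i j * (z₁ * V j)) :
    ∀ i, U i = Complex.exp (c i * z₂) * V i := by
  have key : ∀ n : ℕ, ∀ i : Fin s, i.val < n → U i = Complex.exp (c i * z₂) * V i := by
    intro n
    induction n with
    | zero => intro i hi; omega
    | succ n IH =>
      intro i hi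
      rw [hU, hV, mul_add, Finset.mul_sum]
      congr 1
      apply Finset.sum_congr rfl
      intro j hj
      simp only [Finset.mem_filter] at hj
      have hjn : j.val < n := by
        have := hj.2
        omega
      rw [IH j hjn]
      rw [show (c i - c j) * z₂ = c i * z₂ - c j * z₂ by ring, Complex.exp_sub]
      field_simp [Complex.exp_ne_zero]
  intro i
  exact key (i.val + 1) i (by omega)
end

section
/- Let s : ℕ and let a : Fin s → Fin s → ℂ be strictly lower triangular (a i j = 0 for j ≥ i), b : Fin s → ℂ arbitrary weights, and c i = Σ_j a i j. Fix λ₁, λ₂, h, u₀ ∈ ℂ and set z₁ = hλ₁, z₂ = hλ₂. Define the Lawson stages U : Fin s → ℂ recursively by U i = exp(c i · z₂) · u₀ + Σ_{j<i} a i j · exp((c i − c j) · z₂) · (z₁ · U j), and the Lawson update u⁺ = exp(z₂) · u₀ + Σ_i b i · exp((1 − c i) · z₂) · (z₁ · U i). Define the plain Runge–Kutta stages V : Fin s → ℂ by V i = u₀ + Σ_{j<i} a i j · (z₁ · V j) and the plain update v⁺ = u₀ + Σ_i b i · (z₁ · V i). Then u⁺ = exp(z₂) · v⁺. In other words, the linear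 stability function of the Lawson scheme on the two-timescale test equation ẋ = λ₁x + λ₂x is Φ_Lawson(z₁, z₂) = e^{z₂} · Φ_RK(z₁), where Φ_RK is the stability function of the underlying Runge–Kutta scheme. -/
open Finset Complex

/-- on the two-timescale test equation `ẋ = λ₁x + λ₂x`, one Lawson step
equals `e^{z₂}` times one plain Runge–Kutta step: the Lawson stability function is
`Φ_Lawson(z₁, z₂) = e^{z₂} Φ_RK(z₁)`. -/
theorem lawson_stability_eq_exp_mul_rk
    (s : ℕ) (a : Fin s → Fin s → ℂ)
    (ha : ∀ i j : Fin s, i ≤ j → a i j = 0)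
    (b : Fin s → ℂ) (c : Fin s → ℂ) (hc : ∀ i, c i = ∑ j, a i j)
    (lam₁ lam₂ h u₀ : ℂ) (z₁ z₂ : ℂ) (hz₁ : z₁ = h * lam₁) (hz₂ : z₂ = h * lam₂)
    (U V : Fin s → ℂ)
    (hU : ∀ i, U i = Complex.exp (c i * z₂) * u₀ +
      ∑ j ∈ Finset.univ.filter (fun j => j < i),
        a i j * Complex.exp ((c i - c j) * z₂) * (z₁ * U j))
    (hV : ∀ i, V i = u₀ +
      ∑ j ∈ Finset.univ.filter (fun j => j < i), a i j * (z₁ * V j))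
    (uplus vplus : ℂ)
    (huplus : uplus = Complex.exp z₂ * u₀ +
      ∑ i, b i * Complex.exp ((1 - c i) * z₂) * (z₁ * U i))
    (hvplus : vplus = u₀ + ∑ i, b i * (z₁ * V i)) :
    uplus = Complex.exp z₂ * vplus := by
  have key : ∀ i : Fin s, U i = Complex.exp (c i * z₂) * V i := by
    suffices hkey : ∀ n : ℕ, ∀ i : Fin s, (i : ℕ) < n → U i = Complex.exp (c i * z₂) * V i by
      intro i; exact hkey (i + 1) i (Nat.lt_succ_self _)
    intro n
    induction n with
    | zero => intro i hi; omega
    | succ n ih =>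
      intro i hi
      rw [hU i, hV i, mul_add, Finset.mul_sum]
      congr 1
      apply Finset.sum_congr rfl
      intro j hj
      simp only [Finset.mem_filter] at hj
      rw [ih j (show (j:ℕ) < n by have h2 := hj.2; rw [Fin.lt_def] at h2; omega)]
      rw [show (c i - c j) * z₂ = c i * z₂ + (-(c j * z₂)) by ring,
        Complex.exp_add, Complex.exp_neg]
      have hne : Complex.exp (c j * z₂) ≠ 0 := Complex.exp_ne_zero _
      field_simp
  rw [huplus, hvplus, mul_add, Finset.mul_sum]
  congr 1
  apply Finset.sum_congr rfl
  intro i _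
  rw [key i, show (1 - c i) * z₂ = z₂ + (-(c i * z₂)) by ring,
    Complex.exp_add, Complex.exp_neg]
  have hne : Complex.exp (c i * z₂) ≠ 0 := Complex.exp_ne_zero _
  field_simp
end

section
/- Lawson's change of variables: let n : ℕ, A : Matrix (Fin n) (Fin n) ℝ, g : (Fin n → ℝ) → (Fin n → ℝ), and let u : ℝ → (Fin n → ℝ) satisfy, for every t, HasDerivAt u (g (u t) + A.mulVec (u t)) t. Then the function v defined by v t = (Matrix.exp (−t • A)).mulVec (u t) satisfies, for every t, HasDerivAt v ((Matrix.exp (−t • A)).mulVec (g ((Matrix.exp (t • A)).mulVec (v t)))) t; equivalently, v′ t = exp(−tA) g(exp(tA) v t), so the stiff linear term is removed from the transformed dynamics. -/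
open NormedSpace

attribute [local instance] Matrix.linftyOpNormedRing Matrix.linftyOpNormedAlgebra

/-- Lawson's change of variables: if `u̇ = g(u) + Au`, then
`v t = exp(−tA) u t` satisfies `v̇ t = exp(−tA) g(exp(tA) v t)`, i.e. the stiff
linear term is removed from the transformed dynamics. -/
theorem lawson_change_of_variables
    (n : ℕ) (A : Matrix (Fin n) (Fin n) ℝ)
    (g : (Fin n → ℝ) → (Fin n → ℝ)) (u : ℝ → (Fin n → ℝ))
    (hu : ∀ t : ℝ, HasDerivAt u (g (u t) + A.mulVec (u t)) t)
    (v : ℝ → (Fin n → ℝ))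
    (hv : ∀ t : ℝ, v t = (NormedSpace.exp ((-t) • A)).mulVec (u t)) :
    ∀ t : ℝ, HasDerivAt v
      ((NormedSpace.exp ((-t) • A)).mulVec (g ((NormedSpace.exp (t • A)).mulVec (v t)))) t := by
  intro t
  -- the bilinear map mulVec as a CLM
  let L : Matrix (Fin n) (Fin n) ℝ →L[ℝ] (Fin n → ℝ) →L[ℝ] (Fin n → ℝ) :=
    LinearMap.toContinuousLinearMap
      { toFun := fun M => LinearMap.toContinuousLinearMap (M.mulVecLin)
        map_add' := by intro x y; ext w i; simp [Matrix.add_mulVec]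
        map_smul' := by intro c x; ext w i; simp [Matrix.smul_mulVec] }
  have hL : ∀ (M : Matrix (Fin n) (Fin n) ℝ) (w : Fin n → ℝ), L M w = M.mulVec w := by
    intro M w; rfl
  -- derivative of W t = exp ((-t) • A)
  have hW : HasDerivAt (fun s : ℝ => exp ((-s) • A))
      (-(exp ((-t) • A) * A)) t := by
    have h := hasDerivAt_exp_smul_const (-A) t
    have h2 : HasDerivAt (fun s : ℝ => exp (s • (-A))) (exp (t • (-A)) * (-A)) t := h
    simp only [smul_neg, ← neg_smul] at h2
    convert h2 using 1
    simp [mul_neg]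
  have hc : HasDerivAt (fun s : ℝ => L (exp ((-s) • A)))
      (L (-(exp ((-t) • A) * A))) t :=
    L.hasFDerivAt.comp_hasDerivAt t hW
  have key := hc.clm_apply (hu t)
  have hveq : v = fun s => L (exp ((-s) • A)) (u s) := by
    funext s; rw [hv s]; rfl
  have key2 : HasDerivAt v
      ((L (-(exp ((-t) • A) * A))) (u t) + (L (exp ((-t) • A))) (g (u t) + A.mulVec (u t))) t := by
    rw [hveq]; exact key
  convert key2 using 1
  have huv : (exp (t • A)).mulVec (v t) = u t := by
    rw [hv t, Matrix.mulVec_mulVec, ← Matrix.exp_add_of_commute, ← add_smul]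
    · simp
    · exact (Commute.refl A).smul_left t |>.smul_right (-t)
  rw [huv]
  simp only [hL, map_neg, ContinuousLinearMap.neg_apply]
  rw [Matrix.mulVec_add]
  have : (exp ((-t) • A) * A).mulVec (u t) = (exp ((-t) • A)).mulVec (A.mulVec (u t)) := by
    rw [Matrix.mulVec_mulVec]
  rw [this]
  abel
end
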